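/- For every integer k ≥ 0, the characteristic polynomial det(x·I - R_{4k+3}) of the (4k+3)×(4k+3) matrix R_{4k+3} over the field ℤ/3ℤ equals (x^4 - 1)^k (x + 1)(x^2 + 1) if k is even, and (x^4 - 1)^k (x - 1)(x^2 + 1) if k is odd. -/

import Mathlib

open Polynomial

/-- `R n` over `ℤ/3ℤ`: the `(i,j)` entry (1-based) is `C(i-1, n-j)` mod 3. -/
def binR3 (n : ℕ) : Matrix (Fin n) (Fin n) (ZMod 3) :=
  fun i j => (Nat.choose i (n - 1 - j) : ZMod 3)

namespace Stmt9Aux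
open Matrix Finset


variable {K : Type*} [Field K]

lemma coeff_comp_sum (p g : K[X]) {n : ℕ} (hp : p.natDegree < n) (i : ℕ) :
    (p.comp g).coeff i = ∑ j ∈ Finset.range n, p.coeff j * (g ^ j).coeff i := by
  rw [comp_eq_sum_left, p.sum_over_range' (by simp) n hp, Polynomial.finset_sum_coeff]
  simp [coeff_C_mul]

lemma natDegree_reflect_le {p : K[X]} {N : ℕ} (h : p.natDegree ≤ N) :
    (reflect N p).natDegree ≤ N := by
  apply natDegree_le_iff_coeff_eq_zero.mpr
  intro m hm
  rw [coeff_reflect, revAt_eq_self_of_lt hm]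
  exact coeff_eq_zero_of_natDegree_lt (lt_of_le_of_lt h hm)

lemma key_sum (q : K[X]) {n : ℕ} (hn : 0 < n) (hq : q.natDegree ≤ n - 1) (i : ℕ) :
    ∑ j ∈ Finset.range n, ((n - 1 - j).choose i : K) * q.coeff j
      = ((reflect (n - 1) q).comp (X + 1)).coeff i := by
  rw [coeff_comp_sum (reflect (n-1) q) (X+1) (n := n)
      (lt_of_le_of_lt (natDegree_reflect_le hq) (by omega)) i]
  rw [show (∑ j ∈ Finset.range n, (reflect (n-1) q).coeff j * ((X+1:K[X])^j).coeff i)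
      = ∑ j ∈ Finset.range n,
          (reflect (n-1) q).coeff (n-1-j) * ((X+1:K[X])^(n-1-j)).coeff i from
    (Finset.sum_range_reflect _ n).symm]
  apply Finset.sum_congr rfl
  intro j hj
  rw [Finset.mem_range] at hj
  rw [coeff_reflect, revAt_le (by omega : n - 1 - j ≤ n - 1), coeff_X_add_one_pow]
  have h1 : n - 1 - (n - 1 - j) = j := by omega
  rw [h1, mul_comm]

lemma reflect_one_X_add_C (c : K) : reflect 1 (X + C c) = 1 + C c * X := by
  rw [reflect_add, ← pow_one (X : K[X]), reflect_monomial, reflect_C]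
  rw [revAt_le (le_refl 1), pow_one]
  norm_num

lemma reflect_pow_X_add_C (c : K) (a : ℕ) :
    reflect a ((X + C c) ^ a) = (1 + C c * X) ^ a := by
  induction a with
  | zero => simp
  | succ a ih =>
    have h1 : ((X + C c) ^ a).natDegree ≤ a := by
      refine natDegree_pow_le.trans ?_
      rw [natDegree_X_add_C, mul_one]
    have h2 : (X + C c : K[X]).natDegree ≤ 1 := le_of_eq (natDegree_X_add_C c)
    rw [pow_succ, reflect_mul _ _ h1 h2, ih, reflect_one_X_add_C, ← pow_succ]





variable {K : Type*} [Field K]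

lemma charpoly_diagonal {m : Type*} [Fintype m] [DecidableEq m] (d : m → K) :
    (Matrix.diagonal d).charpoly = ∏ i, (X - C (d i)) := by
  have h : charmatrix (Matrix.diagonal d) = Matrix.diagonal (fun i => (X : K[X]) - C (d i)) := by
    ext i j
    by_cases hij : i = j
    · subst hij; simp
    · rw [charmatrix_apply_ne _ _ _ hij, Matrix.diagonal_apply_ne _ hij,
        Matrix.diagonal_apply_ne _ hij, map_zero, neg_zero]
  rw [Matrix.charpoly, h, Matrix.det_diagonal]

lemma charpoly_eq_of_mul_eq {m : Type*} [Fintype m] [DecidableEq m]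
    {A P D : Matrix m m K} (hP : IsUnit P.det) (h : A * P = P * D) :
    A.charpoly = D.charpoly := by
  have hPC : IsUnit ((P.map (C : K →+* K[X])).det) := by
    rw [← RingHom.mapMatrix_apply, ← RingHom.map_det]
    exact hP.map C
  have h2 : A.map (C : K →+* K[X]) * P.map C = P.map C * D.map C := by
    rw [← Matrix.map_mul, ← Matrix.map_mul, h]
  have key : charmatrix A * P.map C = P.map C * charmatrix D := by
    show (Matrix.scalar m (X : K[X]) - (C : K →+* K[X]).mapMatrix A) * P.map C
        = P.map C * (Matrix.scalar m (X : K[X]) - (C : K →+* K[X]).mapMatrix D)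
    rw [sub_mul, mul_sub]
    rw [(Matrix.scalar_commute (X : K[X]) (fun r' => Commute.all X r') (P.map C)).eq]
    rw [RingHom.mapMatrix_apply, RingHom.mapMatrix_apply, h2]
  have hdet := congrArg Matrix.det key
  rw [Matrix.det_mul, Matrix.det_mul] at hdet
  rw [mul_comm (charmatrix A).det _] at hdet
  exact hPC.mul_left_cancel hdet

lemma charpoly_transpose {m : Type*} [Fintype m] [DecidableEq m] (A : Matrix m m K) :
    Aᵀ.charpoly = A.charpoly := by
  rw [Matrix.charpoly, Matrix.charpoly, ← Matrix.det_transpose (charmatrix Aᵀ)]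
  congr 1
  ext i j
  by_cases hij : i = j
  · subst hij; simp
  · rw [Matrix.transpose_apply, charmatrix_apply_ne _ _ _ (Ne.symm hij),
      charmatrix_apply_ne _ _ _ hij, Matrix.transpose_apply]

lemma Emap_eigen (α β : K) (hα : α ^ 2 = α + 1) (hβ : β ^ 2 = β + 1) (a b : ℕ) :
    (reflect (a + b) ((X + C α) ^ a * (X + C β) ^ b)).comp (X + 1)
      = C (α ^ a * β ^ b) * ((X + C α) ^ a * (X + C β) ^ b) := by
  have h1 : ((X + C α) ^ a).natDegree ≤ a := by
    refine natDegree_pow_le.trans ?_; rw [natDegree_X_add_C, mul_one]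
  have h2 : ((X + C β) ^ b).natDegree ≤ b := by
    refine natDegree_pow_le.trans ?_; rw [natDegree_X_add_C, mul_one]
  rw [reflect_mul _ _ h1 h2, reflect_pow_X_add_C, reflect_pow_X_add_C]
  simp only [mul_comp, pow_comp, add_comp, one_comp, C_comp, X_comp]
  have hCα : (C α : K[X]) * C α = C α + 1 := by
    rw [← C_mul, ← C_1, ← C_add]
    congr 1
    linear_combination hα
  have hCβ : (C β : K[X]) * C β = C β + 1 := by
    rw [← C_mul, ← C_1, ← C_add]
    congr 1
    linear_combination hβ
  have eα : (1 : K[X]) + C α * (X + 1) = C α * (X + C α) := by linear_combination -hCα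
  have eβ : (1 : K[X]) + C β * (X + 1) = C β * (X + C β) := by linear_combination -hCβ
  rw [eα, eβ, mul_pow, mul_pow, ← C_pow, ← C_pow, C_mul]
  ring


theorem charpoly_M {n : ℕ} (hn : 0 < n) (α β : K)
    (hα : α ^ 2 = α + 1) (hβ : β ^ 2 = β + 1) (hne : α ≠ β) :
    (Matrix.of fun i j : Fin n => ((n - 1 - (j : ℕ)).choose (i : ℕ) : K)).charpoly
      = ∏ a : Fin n, (X - C (α ^ (a : ℕ) * β ^ (n - 1 - (a : ℕ)))) := by
  classical
  have hγ : α - β ≠ 0 := sub_ne_zero.mpr hne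
  set q : Fin n → K[X] :=
    fun a => (X + C α) ^ (a : ℕ) * (X + C β) ^ (n - 1 - (a : ℕ)) with hq
  have hdeg : ∀ a : Fin n, (q a).natDegree = n - 1 := by
    intro a
    rw [hq]
    rw [Polynomial.Monic.natDegree_mul ((monic_X_add_C α).pow _) ((monic_X_add_C β).pow _),
      (monic_X_add_C α).natDegree_pow, (monic_X_add_C β).natDegree_pow, natDegree_X_add_C,
      natDegree_X_add_C]
    have := a.isLt; omega
  set PM : Matrix (Fin n) (Fin n) K := Matrix.of (fun i a => (q a).coeff i) with hPM
  set DM : Matrix (Fin n) (Fin n) K :=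
    Matrix.diagonal (fun a : Fin n => α ^ (a : ℕ) * β ^ (n - 1 - (a : ℕ))) with hDM
  -- step 1 : M * P = P * D
  have hMP : (Matrix.of fun i j : Fin n => ((n - 1 - (j : ℕ)).choose (i : ℕ) : K)) * PM
      = PM * DM := by
    ext i a
    rw [Matrix.mul_apply, hDM, Matrix.mul_diagonal]
    have hstep : (∑ j : Fin n, ((n - 1 - (j : ℕ)).choose (i : ℕ) : K) * (q a).coeff j)
        = ∑ j ∈ Finset.range n, ((n - 1 - j).choose (i : ℕ) : K) * (q a).coeff j :=
      Fin.sum_univ_eq_sum_range (fun j => ((n - 1 - j).choose (i : ℕ) : K) * (q a).coeff j) n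
    have hqd : (q a).natDegree ≤ n - 1 := le_of_eq (hdeg a)
    have hsplit : n - 1 = (a : ℕ) + (n - 1 - (a : ℕ)) := by have := a.isLt; omega
    have heig : (reflect (n - 1) (q a)).comp (X + 1)
        = C (α ^ (a : ℕ) * β ^ (n - 1 - (a : ℕ))) * q a := by
      rw [hq]
      rw [show reflect (n - 1) ((X + C α) ^ (a : ℕ) * (X + C β) ^ (n - 1 - (a : ℕ)))
          = reflect ((a : ℕ) + (n - 1 - (a : ℕ)))
              ((X + C α) ^ (a : ℕ) * (X + C β) ^ (n - 1 - (a : ℕ))) from by rw [← hsplit]]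
      exact Emap_eigen α β hα hβ _ _
    show (∑ j : Fin n, ((n - 1 - (j : ℕ)).choose (i : ℕ) : K) * (q a).coeff j) = _
    rw [hstep, key_sum (q a) hn hqd (i : ℕ), heig, coeff_C_mul]
    show _ = (q a).coeff i * _
    ring
  -- step 2 : P = T * B
  set T : Matrix (Fin n) (Fin n) K :=
    Matrix.of (fun i j : Fin n => (((X + C β) ^ (j : ℕ)).coeff (i : ℕ))) with hT
  set B : Matrix (Fin n) (Fin n) K :=
    Matrix.of (fun j a : Fin n =>
      (((X + C (α - β)) ^ (a : ℕ) * X ^ (n - 1 - (a : ℕ))).coeff (j : ℕ))) with hB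
  have hsdeg : ∀ a : Fin n,
      ((X + C (α - β)) ^ (a : ℕ) * X ^ (n - 1 - (a : ℕ))).natDegree = n - 1 := by
    intro a
    rw [Polynomial.Monic.natDegree_mul ((monic_X_add_C _).pow _) (monic_X_pow _),
      (monic_X_add_C _).natDegree_pow, natDegree_X_add_C, natDegree_X_pow]
    have := a.isLt; omega
  have hTB : T * B = PM := by
    ext i a
    rw [Matrix.mul_apply]
    have hstep : (∑ j : Fin n, T i j * B j a)
        = ∑ j ∈ Finset.range n,
            ((X + C (α - β)) ^ (a : ℕ) * X ^ (n - 1 - (a : ℕ))).coeff j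
              * (((X + C β) ^ j).coeff (i : ℕ)) := by
      refine (Finset.sum_congr rfl (fun j _ => ?_)).trans
        (Fin.sum_univ_eq_sum_range (fun j =>
          ((X + C (α - β)) ^ (a : ℕ) * X ^ (n - 1 - (a : ℕ))).coeff j
            * (((X + C β) ^ j).coeff (i : ℕ))) n)
      show T i j * B j a = _
      rw [hT, hB, Matrix.of_apply, Matrix.of_apply, mul_comm]
    rw [hstep, ← coeff_comp_sum _ (X + C β) (by rw [hsdeg a]; omega) (i : ℕ)]
    simp only [mul_comp, pow_comp, add_comp, X_comp, C_comp]
    rw [show (X + C β + C (α - β) : K[X]) = X + C α from by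
      rw [add_assoc, ← C_add]; norm_num]
    rfl
  -- step 3 : det T = 1
  have hdetT : T.det = 1 := by
    have htri : T.BlockTriangular id := by
      intro i j hij
      rw [hT, Matrix.of_apply]
      apply coeff_eq_zero_of_natDegree_lt
      rw [(monic_X_add_C β).natDegree_pow, natDegree_X_add_C, mul_one]
      exact hij
    rw [Matrix.det_of_upperTriangular htri]
    have hdiag : ∀ i : Fin n, T i i = 1 := by
      intro i
      rw [hT, Matrix.of_apply]
      have hd : ((X + C β) ^ (i : ℕ)).natDegree = (i : ℕ) := by
        rw [(monic_X_add_C β).natDegree_pow, natDegree_X_add_C, mul_one]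
      have hc := ((monic_X_add_C β).pow (i : ℕ)).coeff_natDegree
      rw [hd] at hc
      exact hc
    simp [hdiag]
  -- step 4 : det B is a unit
  have hdetB : IsUnit B.det := by
    have htri : (B.submatrix Fin.rev id).BlockTriangular id := by
      intro i j hij
      have hij' : (j : ℕ) < (i : ℕ) := hij
      have h1 := i.isLt; have h2 := j.isLt
      rw [Matrix.submatrix_apply, id_eq, hB, Matrix.of_apply, coeff_mul_X_pow',
        if_neg (by rw [Fin.val_rev]; omega)]
    have hd' : (B.submatrix Fin.rev id).det = ∏ a : Fin n, (α - β) ^ (a : ℕ) := by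
      rw [Matrix.det_of_upperTriangular htri]
      apply Finset.prod_congr rfl
      intro a _
      rw [Matrix.submatrix_apply, id_eq, hB, Matrix.of_apply, coeff_mul_X_pow']
      rw [if_pos (by rw [Fin.val_rev]; omega)]
      rw [show (a.rev : ℕ) - (n - 1 - (a : ℕ)) = 0 from by rw [Fin.val_rev]; omega]
      rw [coeff_zero_eq_eval_zero]
      simp
    have hunit' : IsUnit (B.submatrix Fin.rev id).det := by
      rw [hd']
      exact isUnit_iff_ne_zero.mpr (Finset.prod_ne_zero_iff.mpr
        (fun a _ => pow_ne_zero _ hγ))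
    have hperm : (B.submatrix (Fin.revPerm : Equiv.Perm (Fin n)) id).det
        = (Equiv.Perm.sign (Fin.revPerm : Equiv.Perm (Fin n)) : ℤ) * B.det :=
      Matrix.det_permute _ B
    have : (B.submatrix Fin.rev id) = B.submatrix (Fin.revPerm : Equiv.Perm (Fin n)) id := rfl
    rw [this, hperm] at hunit'
    rcases Int.units_eq_one_or (Equiv.Perm.sign (Fin.revPerm : Equiv.Perm (Fin n))) with hs | hs <;>
      rw [hs] at hunit' <;> simpa using hunit'
  have hdetP : IsUnit PM.det := by
    rw [← hTB, Matrix.det_mul, hdetT, one_mul]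
    exact hdetB
  rw [charpoly_eq_of_mul_eq hdetP hMP, hDM, charpoly_diagonal]



lemma four_term (z u : K) (hz : z ^ 2 = -1) :
    (X - C (z * u)) * (X - C u) * (X - C (z ^ 3 * u)) * (X - C (z ^ 2 * u))
      = X ^ 4 - C (u ^ 4) := by
  have hzz : (C z : K[X]) ^ 2 = -1 := by rw [← C_pow, hz, C_neg, C_1]
  simp only [C_mul, C_pow]
  linear_combination (-C u * X ^ 3 + (C u) ^ 4 - C z * C u * X ^ 3 + C z * (C u) ^ 2 * X ^ 2
    + (C z) ^ 2 * (C u) ^ 2 * X ^ 2 - (C z) ^ 2 * (C u) ^ 4 + (C z) ^ 3 * (C u) ^ 2 * X ^ 2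
    - (C z) ^ 3 * (C u) ^ 3 * X - (C z) ^ 4 * (C u) ^ 3 * X + (C z) ^ 4 * (C u) ^ 4) * hzz

lemma prod_eigen (z u : K) (hz : z ^ 2 = -1) (m : ℕ) :
    ∏ a ∈ Finset.range (4 * m + 3), (X - C (z ^ (3 * a) * u))
      = (X ^ 4 - C (u ^ 4)) ^ m
        * ((X - C u) * (X - C (z ^ 3 * u)) * (X - C (z ^ 2 * u))) := by
  have hz4 : z ^ 4 = 1 := by
    rw [show (4 : ℕ) = 2 * 2 from rfl, pow_mul, hz]; norm_num
  induction m with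
  | zero =>
    rw [show 4 * 0 + 3 = 3 from rfl]
    rw [show (3 : ℕ) = 2 + 1 from rfl, prod_range_succ, prod_range_succ, prod_range_one]
    rw [show 3 * 0 = 0 from rfl, pow_zero, one_mul, show 3 * 1 = 3 from rfl,
      show 3 * 2 = 4 + 2 from rfl, pow_add, hz4, one_mul, pow_zero, one_mul]
  | succ m ih =>
    rw [show 4 * (m + 1) + 3 = (4 * m + 3) + 1 + 1 + 1 + 1 from by ring]
    rw [prod_range_succ, prod_range_succ, prod_range_succ, prod_range_succ, ih]
    have e1 : z ^ (3 * (4 * m + 3)) = z := by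
      rw [show 3 * (4 * m + 3) = 4 * (3 * m + 2) + 1 from by ring, pow_succ, pow_mul, hz4,
        one_pow, one_mul]
    have e2 : z ^ (3 * (4 * m + 3 + 1)) = 1 := by
      rw [show 3 * (4 * m + 3 + 1) = 4 * (3 * m + 3) from by ring, pow_mul, hz4, one_pow]
    have e3 : z ^ (3 * (4 * m + 3 + 1 + 1)) = z ^ 3 := by
      rw [show 3 * (4 * m + 3 + 1 + 1) = 4 * (3 * m + 3) + 3 from by ring, pow_add, pow_mul,
        hz4, one_pow, one_mul]
    have e4 : z ^ (3 * (4 * m + 3 + 1 + 1 + 1)) = z ^ 2 := by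
      rw [show 3 * (4 * m + 3 + 1 + 1 + 1) = 4 * (3 * m + 4) + 2 from by ring, pow_add, pow_mul,
        hz4, one_pow, one_mul]
    rw [e1, e2, e3, e4, one_mul]
    have hft := four_term z u hz
    rw [pow_succ]
    linear_combination ((X ^ 4 - C (u ^ 4)) ^ m
      * ((X - C u) * (X - C (z ^ 3 * u)) * (X - C (z ^ 2 * u)))) * hft


noncomputable def fpoly : (ZMod 3)[X] := X ^ 2 - X - 1

lemma fpoly_monic : fpoly.Monic := by
  unfold fpoly; monicity!

lemma fpoly_natDegree : fpoly.natDegree = 2 := by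
  unfold fpoly; compute_degree!

lemma fpoly_irr : Irreducible fpoly := by
  rw [fpoly_monic.irreducible_iff_roots_eq_zero_of_degree_le_three
    (by rw [fpoly_natDegree]) (by rw [fpoly_natDegree]; omega)]
  apply Multiset.eq_zero_of_forall_notMem
  intro x hx
  have hx' : fpoly.IsRoot x := isRoot_of_mem_roots hx
  rw [IsRoot.def] at hx'
  unfold fpoly at hx'
  simp only [eval_sub, eval_pow, eval_X, eval_one] at hx'
  clear hx
  revert hx'
  revert x
  decide

end Stmt9Aux

open Stmt9Aux Matrix Finset in
theorem stmt_9 (k : ℕ) :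
    (binR3 (4 * k + 3)).charpoly =
      if Even k then ((X ^ 4 - 1 : (ZMod 3)[X]) ^ k * (X + 1) * (X ^ 2 + 1))
      else ((X ^ 4 - 1 : (ZMod 3)[X]) ^ k * (X - 1) * (X ^ 2 + 1)) := by
  classical
  haveI : Fact (Irreducible fpoly) := ⟨fpoly_irr⟩
  set F := AdjoinRoot fpoly with hF
  set φ : ZMod 3 →+* F := algebraMap (ZMod 3) F with hφ
  have hinj : Function.Injective φ := φ.injective
  set α : F := AdjoinRoot.root fpoly with hαdef
  have hα : α ^ 2 = α + 1 := by
    have h0 : Polynomial.eval₂ (AdjoinRoot.of fpoly) (AdjoinRoot.root fpoly)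
        ((X : (ZMod 3)[X]) ^ 2 - X - 1) = 0 := AdjoinRoot.eval₂_root fpoly
    simp only [eval₂_sub, eval₂_pow, eval₂_X, eval₂_one] at h0
    rw [← hαdef] at h0
    linear_combination h0
  have h3 : (3 : F) = 0 := by
    have h := map_natCast φ 3
    rw [show ((3 : ℕ) : ZMod 3) = 0 from rfl, map_zero] at h
    exact_mod_cast h.symm
  have hβ : (α ^ 3) ^ 2 = α ^ 3 + 1 := by
    linear_combination (α ^ 4 + α ^ 3 + 2 * α ^ 2 + 2 * α + 4) * hα + (2 * α + 1) * h3
  have hne : α ≠ α ^ 3 := by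
    intro h
    have h1 : (1 : F) = 0 := by
      linear_combination (α ^ 2 - α - 1) * hα + (α - 2) * h
    exact one_ne_zero h1
  have h4 : α ^ 4 = -1 := by
    linear_combination (α ^ 2 + α + 2) * hα + (α + 1) * h3
  have hz : (α ^ 2) ^ 2 = -1 := by rw [← pow_mul]; exact h4
  have h8 : α ^ 8 = 1 := by
    rw [show (8 : ℕ) = 4 * 2 from rfl, pow_mul, h4]; norm_num
  -- reduce to computation over F
  apply Polynomial.map_injective φ hinj
  rw [← Matrix.charpoly_map]
  have hA : (binR3 (4 * k + 3)).map φ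
      = ((Matrix.of fun i j : Fin (4 * k + 3) =>
          (((4 * k + 3) - 1 - (j : ℕ)).choose (i : ℕ) : F)).submatrix
            Fin.revPerm Fin.revPerm)ᵀ := by
    ext i j
    have hi := i.isLt; have hj := j.isLt
    simp only [Matrix.map_apply, Matrix.transpose_apply, Matrix.submatrix_apply,
      Matrix.of_apply, binR3, Fin.revPerm_apply]
    rw [map_natCast φ]
    rw [Fin.val_rev, Fin.val_rev]
    rw [show 4 * k + 3 - 1 - (4 * k + 3 - ((i : ℕ) + 1)) = (i : ℕ) from by omega,
      show 4 * k + 3 - ((j : ℕ) + 1) = 4 * k + 3 - 1 - (j : ℕ) from by omega]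
  rw [hA, Stmt9Aux.charpoly_transpose]
  rw [show ((Matrix.of fun i j : Fin (4 * k + 3) =>
        (((4 * k + 3) - 1 - (j : ℕ)).choose (i : ℕ) : F)).submatrix Fin.revPerm Fin.revPerm)
      = (Matrix.reindex Fin.revPerm Fin.revPerm) (Matrix.of fun i j : Fin (4 * k + 3) =>
        (((4 * k + 3) - 1 - (j : ℕ)).choose (i : ℕ) : F)) from by
    rw [Matrix.reindex_apply, Fin.revPerm_symm]]
  rw [Matrix.charpoly_reindex]
  rw [charpoly_M (by omega) α (α ^ 3) hα hβ hne]
  -- eigenvalue rewriting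
  have heival : ∀ a : Fin (4 * k + 3),
      α ^ (a : ℕ) * (α ^ 3) ^ (4 * k + 3 - 1 - (a : ℕ))
        = (α ^ 2) ^ (3 * (a : ℕ)) * (α ^ 2) ^ (2 * k + 3) := by
    intro a
    have ha := a.isLt
    rw [← pow_mul, ← pow_add, ← pow_mul, ← pow_mul, ← pow_add]
    have e : (a : ℕ) + 3 * (4 * k + 3 - 1 - (a : ℕ)) + 8 * (a : ℕ)
        = (2 * (3 * (a : ℕ)) + 2 * (2 * k + 3)) + 8 * k := by omega
    calc α ^ ((a : ℕ) + 3 * (4 * k + 3 - 1 - (a : ℕ)))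
        = α ^ ((a : ℕ) + 3 * (4 * k + 3 - 1 - (a : ℕ))) * (α ^ 8) ^ (a : ℕ) := by
          rw [h8, one_pow, mul_one]
      _ = α ^ ((a : ℕ) + 3 * (4 * k + 3 - 1 - (a : ℕ)) + 8 * (a : ℕ)) := by
          rw [← pow_mul, ← pow_add]
      _ = α ^ ((2 * (3 * (a : ℕ)) + 2 * (2 * k + 3)) + 8 * k) := by rw [e]
      _ = α ^ (2 * (3 * (a : ℕ)) + 2 * (2 * k + 3)) * (α ^ 8) ^ k := by
          rw [← pow_mul, ← pow_add]
      _ = α ^ (2 * (3 * (a : ℕ)) + 2 * (2 * k + 3)) := by rw [h8, one_pow, mul_one]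
  have hprod : (∏ a : Fin (4 * k + 3),
        (X - C (α ^ (a : ℕ) * (α ^ 3) ^ (4 * k + 3 - 1 - (a : ℕ)))))
      = ∏ a ∈ Finset.range (4 * k + 3),
          (X - C ((α ^ 2) ^ (3 * a) * (α ^ 2) ^ (2 * k + 3))) := by
    rw [← Fin.prod_univ_eq_prod_range
      (fun a => (X - C ((α ^ 2) ^ (3 * a) * (α ^ 2) ^ (2 * k + 3)))) (4 * k + 3)]
    exact Finset.prod_congr rfl (fun a _ => by rw [heival a])
  rw [hprod]
  rw [prod_eigen (α ^ 2) ((α ^ 2) ^ (2 * k + 3)) hz k]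
  have hz4 : (α ^ 2) ^ 4 = 1 := by
    rw [show (4 : ℕ) = 2 * 2 from rfl, pow_mul, hz]; norm_num
  have hu4 : ((α ^ 2) ^ (2 * k + 3)) ^ 4 = 1 := by
    rw [← pow_mul, show (2 * k + 3) * 4 = 4 * (2 * k + 3) from by ring, pow_mul, hz4, one_pow]
  rw [hu4, C_1]
  have hzz : (C α : F[X]) ^ 4 = -1 := by rw [← C_pow, h4, C_neg, C_1]
  rcases Nat.even_or_odd k with hk | hk
  · rw [if_pos hk]
    obtain ⟨t, rfl⟩ := hk
    simp only [Polynomial.map_mul, Polynomial.map_pow, Polynomial.map_sub,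
      Polynomial.map_add, Polynomial.map_one, Polynomial.map_X]
    have hu : (α ^ 2) ^ (2 * (t + t) + 3) = (α ^ 2) ^ 3 := by
      rw [show 2 * (t + t) + 3 = 4 * t + 3 from by ring, pow_add, pow_mul, hz4, one_pow, one_mul]
    rw [hu, mul_assoc, mul_assoc]
    congr 1
    simp only [C_mul, C_pow]
    linear_combination (-1 - X - X ^ 2 + (C α : F[X]) ^ 4 + C α ^ 4 * X
      + C α ^ 4 * X ^ 2 - C α ^ 6 * X ^ 2 - C α ^ 8 - C α ^ 8 * X
      - C α ^ 8 * X ^ 2 + C α ^ 12 + C α ^ 12 * X - C α ^ 16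
      + C α ^ 18 * X + C α ^ 20 - C α ^ 24) * hzz
  · rw [if_neg (Nat.not_even_iff_odd.mpr hk)]
    obtain ⟨t, rfl⟩ := hk
    simp only [Polynomial.map_mul, Polynomial.map_pow, Polynomial.map_sub,
      Polynomial.map_add, Polynomial.map_one, Polynomial.map_X]
    have hu : (α ^ 2) ^ (2 * (2 * t + 1) + 3) = (α ^ 2) ^ 1 := by
      rw [show 2 * (2 * t + 1) + 3 = 4 * (t + 1) + 1 from by ring, pow_add, pow_mul, hz4,
        one_pow, one_mul]
    rw [hu, mul_assoc, mul_assoc]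
    congr 1
    simp only [C_mul, C_pow]
    linear_combination (1 - X + X ^ 2 - (C α : F[X]) ^ 2 * X ^ 2 - C α ^ 4
      + C α ^ 4 * X - C α ^ 4 * X ^ 2 + C α ^ 8 + C α ^ 10 * X
      - C α ^ 12) * hzz
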